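/- Let ρ_X be an n×n and ρ_Y an m×m Hermitian positive semidefinite complex matrix, each with trace one, and let ρ_XY = ρ_X ⊗ ρ_Y be their Kronecker product. Then the conditional quantum min-entropy of the product state equals the min-entropy of the first factor: sup over m×m trace-one positive semidefinite σ_Y of ( -log₂ min{λ : λ·(I_n ⊗ σ_Y) - ρ_X ⊗ ρ_Y is positive semidefinite} ) = -log₂ λ_max(ρ_X), and the supremum is attained at σ_Y = ρ_Y. -/

import Mathlib

open Matrix Kronecker ComplexOrder

lemma kron_conjTranspose' {n m p q : ℕ} (A : Matrix (Fin n) (Fin m) ℂ)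
    (B : Matrix (Fin p) (Fin q) ℂ) : (A ⊗ₖ B)ᴴ = Aᴴ ⊗ₖ Bᴴ := by
  ext ⟨i, j⟩ ⟨k, l⟩
  simp [conjTranspose_apply, kroneckerMap_apply, mul_comm]

lemma posSemidef_kron' {n m : ℕ} {A : Matrix (Fin n) (Fin n) ℂ} {B : Matrix (Fin m) (Fin m) ℂ}
    (hA : A.PosSemidef) (hB : B.PosSemidef) : (A ⊗ₖ B).PosSemidef := by
  exact hA.kronecker hB

lemma tensor_quadform' {n m : ℕ} (A : Matrix (Fin n) (Fin n) ℂ) (B : Matrix (Fin m) (Fin m) ℂ)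
    (v : Fin n → ℂ) (w : Fin m → ℂ) :
    star (fun p : Fin n × Fin m => v p.1 * w p.2) ⬝ᵥ
      ((A ⊗ₖ B) *ᵥ fun p => v p.1 * w p.2) =
      (star v ⬝ᵥ A *ᵥ v) * (star w ⬝ᵥ B *ᵥ w) := by
  simp only [dotProduct, mulVec, Pi.star_apply, kroneckerMap_apply, Fintype.sum_prod_type,
    Finset.mul_sum, Finset.sum_mul, star_mul']
  conv_rhs => enter [2, x]; rw [Finset.sum_comm]
  conv_rhs => rw [Finset.sum_comm]
  refine Finset.sum_congr rfl fun i _ => ?_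
  refine Finset.sum_congr rfl fun j _ => ?_
  conv_rhs => rw [Finset.sum_comm]
  refine Finset.sum_congr rfl fun k _ => Finset.sum_congr rfl fun l _ => by ring

lemma sub_kron' {n m : ℕ} (A B : Matrix (Fin n) (Fin n) ℂ) (C : Matrix (Fin m) (Fin m) ℂ) :
    (A - B) ⊗ₖ C = A ⊗ₖ C - B ⊗ₖ C := by
  ext ⟨i, j⟩ ⟨k, l⟩
  simp [kroneckerMap_apply, sub_mul]

lemma smul_one_sub_posSemidef' {n : ℕ} {A : Matrix (Fin n) (Fin n) ℂ} (hA : A.PosSemidef)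
    {t : ℝ} (ht : ∀ i, hA.isHermitian.eigenvalues i ≤ t) :
    ((t : ℂ) • 1 - A).PosSemidef := by
  set U := (Matrix.IsHermitian.eigenvectorUnitary hA.isHermitian : Matrix (Fin n) (Fin n) ℂ)
    with hUdef
  have hU : U * star U = 1 :=
    (Matrix.mem_unitaryGroup_iff).mp (Matrix.IsHermitian.eigenvectorUnitary hA.isHermitian).2
  have hdiag : diagonal (fun i => ((t - hA.isHermitian.eigenvalues i : ℝ) : ℂ)) =
      (t : ℂ) • (1 : Matrix (Fin n) (Fin n) ℂ)
        - diagonal (RCLike.ofReal ∘ hA.isHermitian.eigenvalues) := by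
    ext i j
    by_cases h : i = j <;>
      simp [Matrix.diagonal_apply, h, Matrix.one_apply, Matrix.sub_apply, Matrix.smul_apply,
        Complex.ofReal_sub, smul_eq_mul]
  have key : (t : ℂ) • 1 - A =
      U * diagonal (fun i => ((t - hA.isHermitian.eigenvalues i : ℝ) : ℂ)) * star U := by
    rw [hdiag, Matrix.mul_sub, Matrix.sub_mul, mul_smul_comm, Matrix.mul_one,
      Matrix.smul_mul, hU]
    exact congrArg (_ - ·) hA.isHermitian.spectral_theorem
  rw [key]
  have hdpsd : (diagonal (fun i => ((t - hA.isHermitian.eigenvalues i : ℝ) : ℂ))).PosSemidef :=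
    Matrix.posSemidef_diagonal_iff.mpr fun i => by
      rw [Complex.zero_le_real]; linarith [ht i]
  simpa [Matrix.star_eq_conjTranspose] using hdpsd.mul_mul_conjTranspose_same U

lemma trace_eq_sum_eig' {n : ℕ} {A : Matrix (Fin n) (Fin n) ℂ} (hA : A.IsHermitian) :
    A.trace = ∑ i, (hA.eigenvalues i : ℂ) := by
  conv_lhs => rw [hA.spectral_theorem, Unitary.conjStarAlgAut_apply]
  rw [Matrix.trace_mul_cycle]
  have hU : star (Matrix.IsHermitian.eigenvectorUnitary hA : Matrix (Fin n) (Fin n) ℂ)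
      * (Matrix.IsHermitian.eigenvectorUnitary hA : Matrix (Fin n) (Fin n) ℂ) = 1 :=
    (Matrix.mem_unitaryGroup_iff').mp (Matrix.IsHermitian.eigenvectorUnitary hA).2
  rw [hU, Matrix.one_mul, Matrix.trace_diagonal]
  rfl

/-- For trace-one positive semidefinite `ρ_X` (n×n) and `ρ_Y` (m×m), the
conditional quantum min-entropy of the product state `ρ_X ⊗ ρ_Y`, i.e. the supremum over
trace-one PSD `σ_Y` of `-log₂ min{λ : λ·(I ⊗ σ_Y) - ρ_X ⊗ ρ_Y PSD}`, equals
`-log₂ λ_max(ρ_X)`, and the supremum is attained at `σ_Y = ρ_Y`. -/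
theorem quantum_condMinEntropy_product_state (n m : ℕ) (hn : 0 < n) (hm : 0 < m)
    (ρX : Matrix (Fin n) (Fin n) ℂ) (hX : ρX.PosSemidef) (htrX : ρX.trace = 1)
    (ρY : Matrix (Fin m) (Fin m) ℂ) (hY : ρY.PosSemidef) (htrY : ρY.trace = 1) :
    IsGreatest {v : ℝ | ∃ σ : Matrix (Fin m) (Fin m) ℂ, σ.PosSemidef ∧ σ.trace = 1 ∧
          v = -Real.logb 2 (sInf {l : ℝ |
            ((l : ℂ) • ((1 : Matrix (Fin n) (Fin n) ℂ) ⊗ₖ σ) - ρX ⊗ₖ ρY).PosSemidef})}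
        (-Real.logb 2 (⨆ i, hX.isHermitian.eigenvalues i)) ∧
      -Real.logb 2 (sInf {l : ℝ |
          ((l : ℂ) • ((1 : Matrix (Fin n) (Fin n) ℂ) ⊗ₖ ρY) - ρX ⊗ₖ ρY).PosSemidef})
        = -Real.logb 2 (⨆ i, hX.isHermitian.eigenvalues i) := by
  have hnE : Nonempty (Fin n) := Fin.pos_iff_nonempty.mp hn
  set E := hX.isHermitian.eigenvalues with hE
  have hEnn : ∀ i, 0 ≤ E i := fun i => hX.eigenvalues_nonneg i
  have htrsum : ∑ i, E i = 1 := by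
    have h1 : ρX.trace = ∑ i, (E i : ℂ) := trace_eq_sum_eig' hX.isHermitian
    rw [htrX] at h1
    have h2 : ((∑ i, E i : ℝ) : ℂ) = ((1 : ℝ) : ℂ) := by push_cast; rw [← h1]
    exact_mod_cast h2
  obtain ⟨i0, hi0⟩ : ∃ i0, ∀ j, E j ≤ E i0 := Finite.exists_max E
  have hsup : (⨆ i, E i) = E i0 :=
    le_antisymm (ciSup_le hi0) (le_ciSup (Finite.bddAbove_range E) i0)
  have hpos : 0 < E i0 := by
    by_contra h
    push_neg at h
    have hz : ∀ i, E i = 0 := fun i => le_antisymm ((hi0 i).trans h) (hEnn i)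
    rw [Finset.sum_congr rfl (fun i _ => hz i), Finset.sum_const, smul_zero] at htrsum
    norm_num at htrsum
  have hle1 : E i0 ≤ 1 := htrsum ▸ Finset.single_le_sum (fun i _ => hEnn i) (Finset.mem_univ i0)
  -- key lower bound
  have key : ∀ (l : ℝ) (σ : Matrix (Fin m) (Fin m) ℂ), σ.PosSemidef → σ.trace = 1 →
      ((l : ℂ) • ((1 : Matrix (Fin n) (Fin n) ℂ) ⊗ₖ σ) - ρX ⊗ₖ ρY).PosSemidef → E i0 ≤ l := by
    intro l σ hσ hσtr hM
    set v : Fin n → ℂ := ⇑(hX.isHermitian.eigenvectorBasis i0) with hv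
    have hvv : star v ⬝ᵥ v = 1 := by
      have h := orthonormal_iff_ite.mp hX.isHermitian.eigenvectorBasis.orthonormal i0 i0
      rw [if_pos rfl, EuclideanSpace.inner_eq_star_dotProduct] at h
      rw [dotProduct_comm]; exact h
    have hAv : star v ⬝ᵥ (ρX *ᵥ v) = (E i0 : ℂ) := by
      rw [hX.isHermitian.mulVec_eigenvectorBasis, dotProduct_smul, ← hv, hvv]
      simp [Complex.real_smul]
      rfl
    have hterm : ∀ j : Fin m, 0 ≤ (l : ℂ) * σ j j - (E i0 : ℂ) * ρY j j := by
      intro j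
      set w : Fin m → ℂ := Pi.single j 1 with hw
      have h0 := hM.dotProduct_mulVec_nonneg (fun p : Fin n × Fin m => v p.1 * w p.2)
      rw [sub_mulVec, smul_mulVec, dotProduct_sub, dotProduct_smul,
        tensor_quadform', tensor_quadform', one_mulVec, hvv, hAv] at h0
      have hww : star w ⬝ᵥ σ *ᵥ w = σ j j := by
        simp [hw, dotProduct, mulVec, Pi.single_apply, mul_ite, ite_mul,
          Finset.sum_ite_eq', apply_ite]
      have hww' : star w ⬝ᵥ ρY *ᵥ w = ρY j j := by
        simp [hw, dotProduct, mulVec, Pi.single_apply, mul_ite, ite_mul,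
          Finset.sum_ite_eq', apply_ite]
      rw [hww, hww'] at h0
      simpa using h0
    have hsum : (0 : ℂ) ≤ ∑ j, ((l : ℂ) * σ j j - (E i0 : ℂ) * ρY j j) :=
      Finset.sum_nonneg fun j _ => hterm j
    have heval : ∑ j, ((l : ℂ) * σ j j - (E i0 : ℂ) * ρY j j)
        = (l : ℂ) - (E i0 : ℂ) := by
      rw [Finset.sum_sub_distrib, ← Finset.mul_sum, ← Finset.mul_sum]
      have h1 : ∑ j, σ j j = 1 := hσtr
      have h2 : ∑ j, ρY j j = 1 := htrY
      rw [h1, h2, mul_one, mul_one]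
    rw [heval] at hsum
    have : (0 : ℂ) ≤ ((l - E i0 : ℝ) : ℂ) := by push_cast; exact hsum
    rw [Complex.zero_le_real] at this
    linarith
  -- membership at σ = ρY
  have hmem : (((E i0 : ℝ) : ℂ) • ((1 : Matrix (Fin n) (Fin n) ℂ) ⊗ₖ ρY) - ρX ⊗ₖ ρY).PosSemidef := by
    have h1 : ((E i0 : ℝ) : ℂ) • ((1 : Matrix (Fin n) (Fin n) ℂ) ⊗ₖ ρY) - ρX ⊗ₖ ρY
        = (((E i0 : ℝ) : ℂ) • (1 : Matrix (Fin n) (Fin n) ℂ) - ρX) ⊗ₖ ρY := by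
      rw [sub_kron', Matrix.smul_kronecker]
    rw [h1]
    exact posSemidef_kron' (smul_one_sub_posSemidef' hX hi0) hY
  have hInfEq : sInf {l : ℝ |
      ((l : ℂ) • ((1 : Matrix (Fin n) (Fin n) ℂ) ⊗ₖ ρY) - ρX ⊗ₖ ρY).PosSemidef} = E i0 :=
    IsLeast.csInf_eq ⟨hmem, fun l hl => key l ρY hY htrY hl⟩
  refine ⟨⟨⟨ρY, hY, htrY, by rw [hInfEq, hsup]⟩, ?_⟩, by rw [hInfEq, hsup]⟩
  rintro x ⟨σ, hσ, hσtr, rfl⟩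
  rw [hsup]
  by_cases hS : {l : ℝ |
      ((l : ℂ) • ((1 : Matrix (Fin n) (Fin n) ℂ) ⊗ₖ σ) - ρX ⊗ₖ ρY).PosSemidef}.Nonempty
  · have hlb : E i0 ≤ sInf {l : ℝ |
        ((l : ℂ) • ((1 : Matrix (Fin n) (Fin n) ℂ) ⊗ₖ σ) - ρX ⊗ₖ ρY).PosSemidef} :=
      le_csInf hS fun l hl => key l σ hσ hσtr hl
    have hlog := Real.logb_le_logb_of_le (by norm_num : (1:ℝ) < 2) hpos hlb
    linarith
  · rw [Set.not_nonempty_iff_eq_empty] at hS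
    rw [hS, Real.sInf_empty, Real.logb_zero, neg_zero]
    exact neg_nonneg.mpr (Real.logb_nonpos (by norm_num : (1:ℝ) < 2) hpos.le hle1)
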